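/- Let S ⊆ Dic(A,y) with 1 ∉ S and S⁻¹ = S, written S = S₁ ∪ xS₂ with S₁, S₂ ⊆ A. Then the following are equivalent: (1) S₁ ∈ B(A) and S₂ ∈ B(A); (2) Cay(Dic(A,y), S) is integral and S₂⁻¹ = S₂. -/

import Mathlib

open scoped Classical Pointwise

/-- The generalized dicyclic group `Dic(A, y)` where `y : A` satisfies `y * y = 1`.
The element `⟨t, a⟩` represents `x^t * a`, where `x` is the extra generator with
`x ^ 2 = y` and `x * a * x⁻¹ = a⁻¹` for all `a ∈ A`. -/
@[ext]
structure Dic (A : Type*) [CommGroup A] (y : A) (hy : y * y = 1) where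
  t : Bool
  a : A

namespace Dic

variable {A : Type*} [CommGroup A] {y : A} {hy : y * y = 1}

instance : Mul (Dic A y hy) :=
  ⟨fun g h => ⟨xor g.t h.t, (if h.t then g.a⁻¹ else g.a) * h.a * (if g.t && h.t then y else 1)⟩⟩

instance : One (Dic A y hy) := ⟨⟨false, 1⟩⟩

instance : Inv (Dic A y hy) := ⟨fun g => ⟨g.t, if g.t then y * g.a else g.a⁻¹⟩⟩

@[simp] lemma mul_t (g h : Dic A y hy) : (g * h).t = xor g.t h.t := rfl
@[simp] lemma mul_a (g h : Dic A y hy) :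
    (g * h).a = (if h.t then g.a⁻¹ else g.a) * h.a * (if g.t && h.t then y else 1) := rfl
@[simp] lemma one_t : (1 : Dic A y hy).t = false := rfl
@[simp] lemma one_a : (1 : Dic A y hy).a = 1 := rfl
@[simp] lemma inv_t (g : Dic A y hy) : g⁻¹.t = g.t := rfl
@[simp] lemma inv_a (g : Dic A y hy) : g⁻¹.a = if g.t then y * g.a else g.a⁻¹ := rfl

instance : Group (Dic A y hy) where
  mul_assoc g₁ g₂ g₃ := by
    have hyi : y⁻¹ = y := inv_eq_of_mul_eq_one_right hy
    ext
    · cases g₁.t <;> cases g₂.t <;> cases g₃.t <;> simp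
    · cases h₁ : g₁.t <;> cases h₂ : g₂.t <;> cases h₃ : g₃.t <;>
        simp [h₁, h₂, h₃, hyi, mul_inv_rev, mul_comm, mul_assoc, mul_left_comm]
  one_mul g := by ext <;> simp
  mul_one g := by ext <;> simp
  inv_mul_cancel g := by
    ext
    · simp
    · cases h : g.t <;> simp [h, mul_inv_rev, mul_comm, mul_assoc, mul_left_comm]

/-- The canonical embedding of `A` into `Dic A y hy`. -/
def ofA (a : A) : Dic A y hy := ⟨false, a⟩

/-- The extra generator `x` of `Dic A y hy`, satisfying `x ^ 2 = y`. -/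
def x (A : Type*) [CommGroup A] (y : A) (hy : y * y = 1) : Dic A y hy := ⟨true, 1⟩

instance [Fintype A] : Fintype (Dic A y hy) :=
  Fintype.ofEquiv (Bool × A)
    { toFun := fun p => ⟨p.1, p.2⟩
      invFun := fun g => (g.t, g.a)
      left_inv := fun _ => rfl
      right_inv := fun _ => rfl }

end Dic

/-- The Cayley graph of a group `G` with respect to a connection set `S`.  When `1 ∉ S` and
`S⁻¹ = S`, two vertices `g h` are adjacent if and only if `g⁻¹ * h ∈ S`. -/
def cayley {G : Type*} [Group G] (S : Set G) : SimpleGraph G :=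
  SimpleGraph.fromRel fun g h => g⁻¹ * h ∈ S

/-- A graph on a finite vertex set is integral if all eigenvalues of its adjacency matrix
are integers. -/
noncomputable def IsIntegralGraph {V : Type*} [Fintype V] (Γ : SimpleGraph V) : Prop :=
  ∀ μ ∈ spectrum ℝ (Γ.adjMatrix ℝ), ∃ k : ℤ, (k : ℝ) = μ

/-- The distance matrix of a graph on a finite vertex set. -/
noncomputable def distMatrix {V : Type*} [Fintype V] (Γ : SimpleGraph V) : Matrix V V ℝ :=
  Matrix.of fun v w => (Γ.dist v w : ℝ)

/-- A (connected) graph on a finite vertex set is distance integral if all eigenvalues of its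
distance matrix are integers. -/
noncomputable def IsDistanceIntegral {V : Type*} [Fintype V] (Γ : SimpleGraph V) : Prop :=
  ∀ μ ∈ spectrum ℝ (distMatrix Γ), ∃ k : ℤ, (k : ℝ) = μ

/-- The Boolean algebra `B(A)` of a group `A`: the collection of subsets of `A` generated by
the subgroups of `A` under finite intersections, unions, and complements. -/
inductive InBoolAlg (A : Type*) [Group A] : Set A → Prop
  | subgroup (H : Subgroup A) : InBoolAlg A (H : Set A)
  | compl {s : Set A} : InBoolAlg A s → InBoolAlg A sᶜ
  | union {s t : Set A} : InBoolAlg A s → InBoolAlg A t → InBoolAlg A (s ∪ t)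
  | inter {s t : Set A} : InBoolAlg A s → InBoolAlg A t → InBoolAlg A (s ∩ t)

/-- `mulPow S n = S^(n)`, the set of products of `n` elements of `S` (`S^(0) = {1}`). -/
def mulPow {G : Type*} [Monoid G] (S : Set G) (n : ℕ) : Set G :=
  {g | ∃ l : List G, l.length = n ∧ (∀ u ∈ l, u ∈ S) ∧ l.prod = g}

/-- `wordLen S g = ℓ_S(g)`: `0` if `g = 1`, and otherwise the least `n ≥ 1` such that `g` is a
product of `n` elements of `S`. -/
noncomputable def wordLen {G : Type*} [Group G] (S : Set G) (g : G) : ℕ :=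
  if g = 1 then 0 else sInf {n : ℕ | g ∈ mulPow S n}

/-- The distance power `Γ^D`: two distinct vertices are adjacent iff their distance in `Γ`
belongs to `D`. -/
def distPower {V : Type*} (Γ : SimpleGraph V) (D : Finset ℕ) : SimpleGraph V where
  Adj v w := v ≠ w ∧ Γ.dist v w ∈ D
  symm := ⟨fun v w h => ⟨h.1.symm, by rw [SimpleGraph.dist_comm]; exact h.2⟩⟩
  loopless := ⟨fun v h => h.1 rfl⟩

/-- A multiset `(A, f)` lies in `C(A)` iff `f` is constant on each atom
`[a] = {b : ⟨b⟩ = ⟨a⟩}`. -/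
def InCA {A : Type*} [Group A] (f : A → ℕ) : Prop :=
  ∀ a b : A, Subgroup.zpowers a = Subgroup.zpowers b → f a = f b

/-- The two-dimensional representation `R_π` of `Dic A y hy` induced by a one-dimensional
representation `π` of `A`:  `R_π(x) = [[0, π y], [1, 0]]` and `R_π(a) = diag(π a, π a⁻¹)`. -/
noncomputable def Rpi {A : Type*} [CommGroup A] {y : A} {hy : y * y = 1}
    (π : A →* ℂ) (g : Dic A y hy) : Matrix (Fin 2) (Fin 2) ℂ :=
  (if g.t then !![0, π y; 1, 0] else 1) * !![π g.a, 0; 0, π g.a⁻¹]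

/-- The complex-conjugate of a one-dimensional representation. -/
def conjHom {A : Type*} [CommGroup A] (π : A →* ℂ) : A →* ℂ :=
  (starRingEnd ℂ).toMonoidHom.comp π



set_option linter.unusedSectionVars false

section BA

variable {A : Type*} [Group A]

/-- Atom invariance: membership only depends on the generated cyclic subgroup. -/
def AtomInv (S : Set A) : Prop :=
  ∀ a b : A, Subgroup.zpowers a = Subgroup.zpowers b → (a ∈ S ↔ b ∈ S)

theorem InBoolAlg.atomInv {S : Set A} (h : InBoolAlg A S) : AtomInv S := by
  induction h with
  | subgroup H =>
      intro a b hab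
      simp only [SetLike.mem_coe, ← Subgroup.zpowers_le, hab]
  | compl _ ih => intro a b hab; simpa using (ih a b hab).not
  | union _ _ ih1 ih2 => intro a b hab; simp [Set.mem_union, ih1 a b hab, ih2 a b hab]
  | inter _ _ ih1 ih2 => intro a b hab; simp [Set.mem_inter_iff, ih1 a b hab, ih2 a b hab]

theorem AtomInv.inv_eq {S : Set A} (h : AtomInv S) : S⁻¹ = S := by
  ext a
  simpa [Set.mem_inv] using h a⁻¹ a (Subgroup.zpowers_inv)

theorem inBoolAlg_empty : InBoolAlg A (∅ : Set A) := by
  have := (InBoolAlg.subgroup (A := A) ⊤).compl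
  simpa using this

variable [Fintype A]

noncomputable instance : Fintype (Subgroup A) :=
  Fintype.ofInjective (fun H : Subgroup A => (H : Set A)) SetLike.coe_injective

theorem inBoolAlg_biUnion_subgroups (t : Finset (Subgroup A)) :
    InBoolAlg A (⋃ H ∈ t, (H : Set A)) := by
  induction t using Finset.induction with
  | empty => simpa using inBoolAlg_empty
  | insert _ _ hx ih =>
      rw [Finset.set_biUnion_insert]
      exact (InBoolAlg.subgroup _).union ih

theorem inBoolAlg_atom (a : A) :
    InBoolAlg A {b | Subgroup.zpowers b = Subgroup.zpowers a} := by
  have key : {b | Subgroup.zpowers b = Subgroup.zpowers a} =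
      (Subgroup.zpowers a : Set A) ∩
        (⋃ H ∈ Finset.univ.filter (fun H : Subgroup A => H < Subgroup.zpowers a),
          (H : Set A))ᶜ := by
    ext b
    simp only [Set.mem_setOf_eq, Set.mem_inter_iff, Set.mem_compl_iff, Set.mem_iUnion,
      Finset.mem_filter, Finset.mem_univ, true_and, SetLike.mem_coe, not_exists]
    constructor
    · rintro hb
      refine ⟨by rw [← hb]; exact Subgroup.mem_zpowers b, ?_⟩
      rintro H hH hbH
      have : Subgroup.zpowers b ≤ H := Subgroup.zpowers_le.2 hbH
      rw [hb] at this
      exact absurd (lt_of_le_of_lt this hH) (lt_irrefl _)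
    · rintro ⟨hb, hH⟩
      have hle : Subgroup.zpowers b ≤ Subgroup.zpowers a := Subgroup.zpowers_le.2 hb
      rcases lt_or_eq_of_le hle with hlt | heq
      · exact absurd (Subgroup.mem_zpowers b) (hH _ hlt)
      · exact heq
  rw [key]
  exact (InBoolAlg.subgroup _).inter (inBoolAlg_biUnion_subgroups _).compl

theorem inBoolAlg_biUnion_atoms (t : Finset A) :
    InBoolAlg A (⋃ a ∈ t, {b | Subgroup.zpowers b = Subgroup.zpowers a}) := by
  induction t using Finset.induction with
  | empty => simpa using inBoolAlg_empty
  | insert _ _ hx ih =>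
      rw [Finset.set_biUnion_insert]
      exact (inBoolAlg_atom _).union ih

theorem AtomInv.inBoolAlg {S : Set A} (h : AtomInv S) : InBoolAlg A S := by
  have key : S = ⋃ a ∈ S.toFinset, {b | Subgroup.zpowers b = Subgroup.zpowers a} := by
    ext c
    simp only [Set.mem_iUnion, Set.mem_setOf_eq, Set.mem_toFinset]
    constructor
    · intro hc; exact ⟨c, hc, rfl⟩
    · rintro ⟨a, ha, hca⟩
      exact (h c a hca).2 ha
  rw [key]
  exact inBoolAlg_biUnion_atoms _

end BA

section CharSum

variable {A : Type*} [CommGroup A] [Fintype A]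

/-- Sum of a character over a set. -/
noncomputable def charSum (χ : A →* ℂˣ) (S : Set A) : ℂ :=
  ∑ a ∈ Finset.univ.filter (· ∈ S), (χ a : ℂ)

/-- Sum of a character over the generators of a subgroup. -/
noncomputable def genSum (χ : A →* ℂˣ) (K : Subgroup A) : ℂ :=
  ∑ a ∈ Finset.univ.filter (fun a => Subgroup.zpowers a = K), (χ a : ℂ)

theorem charSum_subgroup_int (χ : A →* ℂˣ) (H : Subgroup A) :
    ∃ k : ℤ, charSum χ (H : Set A) = k := by
  by_cases h : ∀ a ∈ H, χ a = 1
  · refine ⟨(Nat.card H : ℤ), ?_⟩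
    rw [charSum]
    have h1 : ∀ a ∈ Finset.univ.filter (· ∈ (H : Set A)), (χ a : ℂ) = 1 := by
      intro a ha
      rw [h a (by simpa using ha), Units.val_one]
    rw [Finset.sum_congr rfl h1, Finset.sum_const, nsmul_eq_mul, mul_one]
    have h2 : Finset.univ.filter (· ∈ (H : Set A)) = Finset.univ.filter (· ∈ H) := by
      apply Finset.filter_congr; intro x _; simp
    rw [h2]
    norm_cast
    rw [Nat.card_eq_fintype_card, Fintype.card_subtype]
  · push_neg at h
    obtain ⟨a0, ha0, hne⟩ := h
    refine ⟨0, ?_⟩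
    have key : (χ a0 : ℂ) * charSum χ (H : Set A) = charSum χ (H : Set A) := by
      rw [charSum, Finset.mul_sum]
      refine Finset.sum_nbij' (fun a => a0 * a) (fun a => a0⁻¹ * a) ?_ ?_ ?_ ?_ ?_
      · intro a ha
        simp only [Finset.mem_filter, Finset.mem_univ, true_and] at ha ⊢
        exact mul_mem ha0 ha
      · intro a ha
        simp only [Finset.mem_filter, Finset.mem_univ, true_and] at ha ⊢
        exact mul_mem (inv_mem ha0) ha
      · intro a _; simp [mul_assoc]
      · intro a _; simp [mul_assoc]
      · intro a _; rw [map_mul]; push_cast; ring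
    have : ((χ a0 : ℂ) - 1) * charSum χ (H : Set A) = 0 := by
      rw [sub_mul, one_mul, key, sub_self]
    rcases mul_eq_zero.1 this with h1 | h2
    · exfalso
      apply hne
      have : (χ a0 : ℂ) = 1 := by linear_combination h1
      exact Units.ext (by simpa using this)
    · simpa using h2

theorem subgroup_card_lt_of_lt {K H : Subgroup A} (h : K < H) :
    Fintype.card K < Fintype.card H := by
  have : (K : Set A) ⊂ (H : Set A) := by
    rw [Set.ssubset_iff_of_subset (by exact_mod_cast h.le)]
    obtain ⟨x, hxH, hxK⟩ := SetLike.exists_of_lt h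
    exact ⟨x, hxH, hxK⟩
  have hlt := Set.ncard_lt_ncard this (Set.toFinite _)
  have e1 : ∀ J : Subgroup A, Fintype.card J = ((J : Set A)).ncard := by
    intro J
    rw [← Nat.card_coe_set_eq, ← Nat.card_eq_fintype_card]
    exact Nat.card_congr (Equiv.subtypeEquivRight (by simp))
  rw [e1 K, e1 H]
  exact hlt

theorem charSum_subgroup_eq_sum_genSum (χ : A →* ℂˣ) (H : Subgroup A) :
    charSum χ (H : Set A) =
      ∑ K ∈ Finset.univ.filter (fun K : Subgroup A => K ≤ H), genSum χ K := by
  have key : Finset.univ.filter (· ∈ (H : Set A)) =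
      (Finset.univ.filter (fun K : Subgroup A => K ≤ H)).biUnion
        (fun K => Finset.univ.filter (fun a => Subgroup.zpowers a = K)) := by
    ext a
    simp only [Finset.mem_filter, Finset.mem_univ, true_and, Finset.mem_biUnion]
    constructor
    · intro ha
      exact ⟨Subgroup.zpowers a, Subgroup.zpowers_le.2 ha, rfl⟩
    · rintro ⟨K, hK, rfl⟩
      exact hK (Subgroup.mem_zpowers a)
  have hdisj : ∀ K1 ∈ Finset.univ.filter (fun K : Subgroup A => K ≤ H),
      ∀ K2 ∈ Finset.univ.filter (fun K : Subgroup A => K ≤ H), K1 ≠ K2 →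
      Disjoint (Finset.univ.filter (fun a => Subgroup.zpowers a = K1))
        (Finset.univ.filter (fun a => Subgroup.zpowers a = K2)) := by
    intro K1 _ K2 _ hne
    apply Finset.disjoint_left.2
    intro a ha1 ha2
    simp only [Finset.mem_filter] at ha1 ha2
    exact hne (ha1.2 ▸ ha2.2 ▸ rfl)
  rw [charSum, key, Finset.sum_biUnion hdisj]
  rfl

theorem genSum_int (χ : A →* ℂˣ) (H : Subgroup A) : ∃ k : ℤ, genSum χ H = k := by
  generalize hn : Fintype.card H = n
  induction n using Nat.strong_induction_on generalizing H with
  | _ n ih =>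
    subst hn
    have hsplit : Finset.univ.filter (fun K : Subgroup A => K ≤ H) =
        insert H (Finset.univ.filter (fun K : Subgroup A => K < H)) := by
      ext K
      simp only [Finset.mem_filter, Finset.mem_univ, true_and, Finset.mem_insert]
      constructor
      · intro h; rcases eq_or_lt_of_le h with h | h
        · exact Or.inl h
        · exact Or.inr h
      · rintro (rfl | h); · exact le_refl _
        · exact h.le
    have hHnot : H ∉ Finset.univ.filter (fun K : Subgroup A => K < H) := by simp
    have heq := charSum_subgroup_eq_sum_genSum χ H
    rw [hsplit, Finset.sum_insert hHnot] at heq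
    have hrest : ∃ k : ℤ,
        ∑ K ∈ Finset.univ.filter (fun K : Subgroup A => K < H), genSum χ K = k := by
      have : ∀ K ∈ Finset.univ.filter (fun K : Subgroup A => K < H),
          ∃ k : ℤ, genSum χ K = k := by
        intro K hK
        simp only [Finset.mem_filter, Finset.mem_univ, true_and] at hK
        exact ih _ (subgroup_card_lt_of_lt hK) K rfl
      choose f hf using this
      refine ⟨∑ K ∈ (Finset.univ.filter (fun K : Subgroup A => K < H)).attach, f K K.2, ?_⟩
      rw [← Finset.sum_attach]
      push_cast
      exact Finset.sum_congr rfl (fun K _ => hf K K.2)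
    obtain ⟨k1, hk1⟩ := hrest
    obtain ⟨k2, hk2⟩ := charSum_subgroup_int χ H
    refine ⟨k2 - k1, ?_⟩
    have : genSum χ H = charSum χ (H : Set A) -
        ∑ K ∈ Finset.univ.filter (fun K : Subgroup A => K < H), genSum χ K := by
      rw [heq]; ring
    rw [this, hk1, hk2]
    push_cast
    ring

theorem charSum_int_of_atomInv (χ : A →* ℂˣ) {S : Set A} (h : AtomInv S) :
    ∃ k : ℤ, charSum χ S = k := by
  have key : Finset.univ.filter (· ∈ S) =
      ((Finset.univ.filter (· ∈ S)).image (fun a => Subgroup.zpowers a)).biUnion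
        (fun K => Finset.univ.filter (fun a => Subgroup.zpowers a = K)) := by
    ext a
    simp only [Finset.mem_filter, Finset.mem_univ, true_and, Finset.mem_biUnion,
      Finset.mem_image]
    constructor
    · intro ha; exact ⟨Subgroup.zpowers a, ⟨a, ha, rfl⟩, rfl⟩
    · rintro ⟨K, ⟨b, hb, rfl⟩, hK⟩
      exact (h a b hK).2 hb
  have hdisj : ∀ K1 ∈ (Finset.univ.filter (· ∈ S)).image (fun a => Subgroup.zpowers a),
      ∀ K2 ∈ (Finset.univ.filter (· ∈ S)).image (fun a => Subgroup.zpowers a), K1 ≠ K2 →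
      Disjoint (Finset.univ.filter (fun a => Subgroup.zpowers a = K1))
        (Finset.univ.filter (fun a => Subgroup.zpowers a = K2)) := by
    intro K1 _ K2 _ hne
    apply Finset.disjoint_left.2
    intro a ha1 ha2
    simp only [Finset.mem_filter] at ha1 ha2
    exact hne (ha1.2 ▸ ha2.2 ▸ rfl)
  rw [charSum, key, Finset.sum_biUnion hdisj]
  have : ∀ K ∈ (Finset.univ.filter (· ∈ S)).image (fun a => Subgroup.zpowers a),
      ∃ k : ℤ, ∑ a ∈ Finset.univ.filter (fun a => Subgroup.zpowers a = K), (χ a : ℂ) = k :=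
    fun K _ => genSum_int χ K
  choose f hf using this
  refine ⟨∑ K ∈ ((Finset.univ.filter (· ∈ S)).image (fun a => Subgroup.zpowers a)).attach,
    f K K.2, ?_⟩
  rw [← Finset.sum_attach]
  push_cast
  exact Finset.sum_congr rfl (fun K _ => hf K K.2)

end CharSum

open IntermediateField Polynomial in
theorem key_galois {n : ℕ} (hn : 0 < n) {k : ℕ} (hk : Nat.Coprime k n) {ι : Type*}
    (t : Finset ι) (c : ι → ℚ) (z : ι → ℂ) (hz : ∀ i ∈ t, z i ^ n = 1) (q : ℚ)
    (h : ∑ i ∈ t, (c i : ℂ) * z i = (q : ℂ)) :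
    ∑ i ∈ t, (c i : ℂ) * z i ^ k = (q : ℂ) := by
  haveI : NeZero n := ⟨hn.ne'⟩
  set ζ : ℂ := Complex.exp (2 * Real.pi * Complex.I / n) with hζdef
  have hζ : IsPrimitiveRoot ζ n := Complex.isPrimitiveRoot_exp n hn.ne'
  set n' : ℕ+ := ⟨n, hn⟩ with hn'
  have hζ' : IsPrimitiveRoot ζ (n' : ℕ) := hζ
  -- the cyclotomic field inside ℂ
  set K : IntermediateField ℚ ℂ := ℚ⟮ζ⟯ with hK
  have hζint : IsIntegral ℚ ζ := by
    refine ⟨X ^ n - C 1, ?_, ?_⟩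
    · apply Polynomial.monic_X_pow_sub_C
      · exact hn.ne'
    · simp [hζ.pow_eq_one]
  haveI hICE : IsCyclotomicExtension {(n' : ℕ)} ℚ K := by
    have H := IntermediateField.adjoin_simple_toSubalgebra_of_isAlgebraic hζint.isAlgebraic
    refine IsCyclotomicExtension.equiv _ _ _ (h := ?_) (.refl : K.toSubalgebra ≃ₐ[ℚ] _)
    rw [H]
    exact hζ'.adjoin_isCyclotomicExtension ℚ
  have hirr : Irreducible (cyclotomic (n' : ℕ) ℚ) := cyclotomic.irreducible_rat n'.pos
  -- the Galois automorphism raising roots of unity to the k-th power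
  set u : (ZMod (n' : ℕ))ˣ := ZMod.unitOfCoprime k hk with hu
  set σ : K ≃ₐ[ℚ] K := (IsCyclotomicExtension.autEquivPow K hirr).symm u with hσdef
  have hσu : (IsCyclotomicExtension.autEquivPow K hirr) σ = u := by
    rw [hσdef]; exact MulEquiv.apply_symm_apply _ _
  -- the canonical primitive root of K and its behaviour under σ
  set ζ₀ : K := IsCyclotomicExtension.zeta (n' : ℕ) ℚ K with hζ₀def
  have hζ₀ : IsPrimitiveRoot ζ₀ (n' : ℕ) := IsCyclotomicExtension.zeta_spec (n' : ℕ) ℚ K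
  have hσζ₀ : ζ₀ ^ ((u : ZMod (n' : ℕ))).val = σ ζ₀ := by
    have := hζ₀.autToPow_spec ℚ σ
    rw [show (hζ₀.autToPow ℚ) σ = u from ?_] at this
    · exact this
    · rw [← hσu]
      rfl
  -- σ raises any n-th root of unity in K to the k-th power
  have hσpow : ∀ w : K, w ^ n = 1 → σ w = w ^ k := by
    intro w hw
    obtain ⟨m, -, rfl⟩ := hζ₀.eq_pow_of_pow_eq_one (by exact_mod_cast hw)
    rw [map_pow, ← hσζ₀, ← pow_mul, ← pow_mul]
    have horder : orderOf ζ₀ = n := hζ₀.eq_orderOf.symm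
    have hval : ((u : ZMod (n' : ℕ))).val ≡ k [MOD n] := by
      have : ((u : ZMod (n' : ℕ))).val = k % n := by
        rw [hu]
        show ((k : ZMod n)).val = k % n
        rw [ZMod.val_natCast]
      rw [this]
      exact Nat.mod_modEq k n
    have hmm : ((u : ZMod (n' : ℕ))).val * m % n = m * k % n := by
      have := hval.mul_right m
      rwa [Nat.mul_comm k m] at this
    rw [← pow_mod_orderOf, horder, hmm, ← horder, pow_mod_orderOf]
  -- lift the z i to K
  have hmem : ∀ i ∈ t, ∃ m : ℕ, ζ ^ m = z i := by
    intro i hi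
    obtain ⟨m, -, hm⟩ := hζ.eq_pow_of_pow_eq_one (hz i hi)
    exact ⟨m, hm⟩
  set e : ι → ℕ := fun i => if h : ∃ m : ℕ, ζ ^ m = z i then h.choose else 0 with hedef
  have he : ∀ i ∈ t, ζ ^ e i = z i := by
    intro i hi
    rw [hedef]
    simp only [hmem i hi, dif_pos]
    exact (hmem i hi).choose_spec
  have hζK : ζ ∈ K := IntermediateField.mem_adjoin_simple_self ℚ ζ
  set ζK : K := ⟨ζ, hζK⟩ with hζKdef
  have hζKn : ζK ^ n = 1 := by
    ext
    push_cast
    exact hζ.pow_eq_one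
  -- the equation in K
  have hsumK : ∑ i ∈ t, (c i : K) * ζK ^ e i = (q : K) := by
    have hinj : Function.Injective (algebraMap K ℂ) := (algebraMap K ℂ).injective
    apply hinj
    rw [map_sum, map_ratCast]
    rw [← h]
    refine Finset.sum_congr rfl fun i hi => ?_
    rw [map_mul, map_pow, map_ratCast]
    congr 1
    rw [show (algebraMap K ℂ) ζK = ζ from rfl, he i hi]
  -- apply σ
  have hsumK2 : ∑ i ∈ t, (c i : K) * (ζK ^ k) ^ e i = (q : K) := by
    have := congrArg σ hsumK
    rw [map_sum, map_ratCast] at this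
    rw [← this]
    refine Finset.sum_congr rfl fun i hi => ?_
    rw [map_mul, map_ratCast, map_pow, hσpow ζK hζKn]
  -- push back to ℂ
  have := congrArg (algebraMap K ℂ) hsumK2
  rw [map_sum, map_ratCast] at this
  rw [← this]
  refine Finset.sum_congr rfl fun i hi => ?_
  rw [map_mul, map_pow, map_pow, map_ratCast]
  rw [show (algebraMap K ℂ) ζK = ζ from rfl]
  rw [← he i hi, ← pow_mul, ← pow_mul, Nat.mul_comm (e i) k]

section Dual

variable {A : Type*} [CommGroup A] [Fintype A]

noncomputable instance fintypeChars : Fintype (A →* ℂˣ) := by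
  have e := (CommGroup.monoidHom_mulEquiv_of_hasEnoughRootsOfUnity A ℂ).some
  exact Fintype.ofEquiv A e.toEquiv.symm

theorem card_chars : Fintype.card (A →* ℂˣ) = Fintype.card A := by
  have e := (CommGroup.monoidHom_mulEquiv_of_hasEnoughRootsOfUnity A ℂ).some
  exact Fintype.card_congr e.toEquiv

theorem sum_chars_apply (a : A) :
    ∑ χ : A →* ℂˣ, ((χ a : ℂ)) = if a = 1 then (Fintype.card A : ℂ) else 0 := by
  by_cases ha : a = 1
  · subst ha
    simp [card_chars]
  · rw [if_neg ha]
    obtain ⟨χ₀, hχ₀⟩ := CommGroup.exists_apply_ne_one_of_hasEnoughRootsOfUnity A ℂ ha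
    have key : (χ₀ a : ℂ) * ∑ χ : A →* ℂˣ, ((χ a : ℂ)) = ∑ χ : A →* ℂˣ, ((χ a : ℂ)) := by
      rw [Finset.mul_sum]
      exact Fintype.sum_equiv (Equiv.mulLeft χ₀) _ _ (fun χ => by
        rw [show (Equiv.mulLeft χ₀) χ = χ₀ * χ from rfl, MonoidHom.mul_apply, Units.val_mul])
    have h2 : ((χ₀ a : ℂ) - 1) * ∑ χ : A →* ℂˣ, ((χ a : ℂ)) = 0 := by
      rw [sub_mul, one_mul, key, sub_self]
    rcases mul_eq_zero.1 h2 with h | h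
    · exfalso
      apply hχ₀
      apply Units.ext
      have : (χ₀ a : ℂ) = 1 := by linear_combination h
      simpa using this
    · exact h
  
theorem fourier_sum (S : Set A) (a : A) :
    ∑ χ : A →* ℂˣ, charSum χ S * ((χ a⁻¹ : ℂ)) =
      if a ∈ S then (Fintype.card A : ℂ) else 0 := by
  have step1 : ∀ χ : A →* ℂˣ, charSum χ S * ((χ a⁻¹ : ℂ)) =
      ∑ b ∈ Finset.univ.filter (· ∈ S), ((χ (b * a⁻¹) : ℂ)) := by
    intro χ
    rw [charSum, Finset.sum_mul]
    exact Finset.sum_congr rfl fun b _ => by rw [map_mul]; push_cast; ring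
  rw [Finset.sum_congr rfl fun χ _ => step1 χ, Finset.sum_comm]
  rw [Finset.sum_congr rfl fun b _ => sum_chars_apply (b * a⁻¹)]
  have : ∀ b : A, b * a⁻¹ = 1 ↔ b = a := fun b => mul_inv_eq_one
  rw [Finset.sum_congr rfl fun b _ => by rw [this b]]
  rw [Finset.sum_ite_eq' (Finset.univ.filter (· ∈ S)) a (fun _ => (Fintype.card A : ℂ))]
  simp

theorem pow_eq_of_zpowers_eq {a b : A} (hab : Subgroup.zpowers a = Subgroup.zpowers b) :
    ∃ k : ℕ, Nat.Coprime k (Fintype.card A) ∧ a ^ k = b := by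
  have hb_mem : b ∈ Subgroup.zpowers a := by rw [hab]; exact Subgroup.mem_zpowers b
  rw [← mem_powers_iff_mem_zpowers] at hb_mem
  obtain ⟨m, hm⟩ := hb_mem
  have hm' : a ^ m = b := hm
  have hdpos : 0 < orderOf a := orderOf_pos a
  have horderb : orderOf b = orderOf a := by
    rw [← Nat.card_zpowers, ← Nat.card_zpowers, hab]
  have hgcd : Nat.gcd (orderOf a) m = 1 := by
    have h1 : orderOf (a ^ m) = orderOf a / Nat.gcd (orderOf a) m := orderOf_pow a
    rw [hm', horderb] at h1
    rcases (Nat.div_eq_self.1 h1.symm) with h | h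
    · exact absurd h hdpos.ne'
    · exact h
  have hcop : Nat.Coprime m (orderOf a) := Nat.coprime_comm.1 hgcd
  have hdvd : orderOf a ∣ Fintype.card A := orderOf_dvd_card
  haveI : NeZero (Fintype.card A) := ⟨Fintype.card_ne_zero⟩
  haveI : NeZero (orderOf a) := ⟨hdpos.ne'⟩
  obtain ⟨u, hu⟩ := ZMod.unitsMap_surjective hdvd (ZMod.unitOfCoprime m hcop)
  refine ⟨((u : ZMod (Fintype.card A))).val, ZMod.val_coe_unit_coprime u, ?_⟩
  have hcast : ((((u : ZMod (Fintype.card A))).val : ℕ) : ZMod (orderOf a)) =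
      ((m : ℕ) : ZMod (orderOf a)) := by
    have h1 : ((ZMod.unitsMap hdvd u : ZMod (orderOf a))) =
        ((ZMod.unitOfCoprime m hcop : ZMod (orderOf a))) := by rw [hu]
    rw [ZMod.unitsMap_def, ZMod.coe_unitOfCoprime, Units.coe_map] at h1
    have h2 : (ZMod.castHom hdvd (ZMod (orderOf a))) (u : ZMod (Fintype.card A)) =
        ((m : ℕ) : ZMod (orderOf a)) := h1
    rw [ZMod.castHom_apply] at h2
    rw [ZMod.natCast_val]
    exact h2
  have hmod : (((u : ZMod (Fintype.card A))).val) % orderOf a = m % orderOf a :=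
    (ZMod.natCast_eq_natCast_iff _ _ _).1 hcast
  have hk : a ^ ((u : ZMod (Fintype.card A))).val = a ^ m := by
    rw [← pow_mod_orderOf, hmod, pow_mod_orderOf]
  rw [hk, hm']

end Dual

section Dual2

variable {A : Type*} [CommGroup A] [Fintype A]

theorem atomInv_of_charSum_rat {S : Set A}
    (hq : ∀ χ : A →* ℂˣ, ∃ q : ℚ, charSum χ S = (q : ℂ)) : AtomInv S := by
  intro a b hab
  obtain ⟨k, hk, hak⟩ := pow_eq_of_zpowers_eq hab
  choose qf hqf using hq
  have hcard : 0 < Fintype.card A := Fintype.card_pos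
  -- Fourier identity at a, with rational coefficients
  set Q : ℚ := if a ∈ S then (Fintype.card A : ℚ) else 0 with hQ
  have hEa : ∑ χ ∈ (Finset.univ : Finset (A →* ℂˣ)), (qf χ : ℂ) * ((χ a⁻¹ : ℂ)) = (Q : ℂ) := by
    rw [Finset.sum_congr rfl fun χ _ => by rw [← hqf χ]]
    rw [fourier_sum S a, hQ]
    split_ifs <;> push_cast <;> ring
  have hz : ∀ χ ∈ (Finset.univ : Finset (A →* ℂˣ)), ((χ a⁻¹ : ℂ)) ^ Fintype.card A = 1 := by
    intro χ _
    have h1 : (χ a⁻¹) ^ Fintype.card A = 1 := by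
      rw [← map_pow, pow_card_eq_one, map_one]
    rw [← Units.val_pow_eq_pow_val, h1, Units.val_one]
  have hkey := key_galois hcard hk Finset.univ qf (fun χ => ((χ a⁻¹ : ℂ))) hz Q hEa
  -- rewrite the k-th powers as values at b⁻¹
  have hstep : ∀ χ : A →* ℂˣ, ((χ a⁻¹ : ℂ)) ^ k = ((χ b⁻¹ : ℂ)) := by
    intro χ
    rw [← hak]
    have h1 : (χ a⁻¹) ^ k = χ ((a ^ k)⁻¹) := by
      rw [← map_pow, inv_pow]
    rw [← Units.val_pow_eq_pow_val, h1]
  rw [Finset.sum_congr rfl fun χ _ => by rw [hstep χ]] at hkey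
  have hEb : ∑ χ ∈ (Finset.univ : Finset (A →* ℂˣ)), (qf χ : ℂ) * ((χ b⁻¹ : ℂ)) =
      if b ∈ S then (Fintype.card A : ℂ) else 0 := by
    rw [Finset.sum_congr rfl fun χ _ => by rw [← hqf χ]]
    exact fourier_sum S b
  rw [hkey] at hEb
  have hQc : (Q : ℂ) = if a ∈ S then (Fintype.card A : ℂ) else 0 := by
    rw [hQ]; split_ifs <;> push_cast <;> ring
  rw [hQc] at hEb
  have hcFne : (Fintype.card A : ℂ) ≠ 0 := by
    exact_mod_cast hcard.ne'
  constructor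
  · intro haS
    by_contra hbS
    rw [if_pos haS, if_neg hbS] at hEb
    exact hcFne hEb
  · intro hbS
    by_contra haS
    rw [if_neg haS, if_pos hbS] at hEb
    exact hcFne hEb.symm

end Dual2


theorem set_inv_pointwise {A : Type*} [Group A] {T : Set A} (h : T⁻¹ = T) :
    ∀ a : A, a ∈ T ↔ a⁻¹ ∈ T := by
  intro a
  conv_rhs => rw [← h]
  rw [Set.mem_inv, inv_inv]

section Spectral

variable {A : Type*} [CommGroup A] [Fintype A] {y : A} {hy : y * y = 1}

/-- The explicit equivalence with `Bool × A`. -/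
def dicEquiv : Dic A y hy ≃ Bool × A :=
  { toFun := fun g => (g.t, g.a)
    invFun := fun p => ⟨p.1, p.2⟩
    left_inv := fun _ => rfl
    right_inv := fun _ => rfl }

theorem sum_dic (F : Dic A y hy → ℂ) :
    ∑ g : Dic A y hy, F g = (∑ a : A, F ⟨false, a⟩) + ∑ a : A, F ⟨true, a⟩ := by
  rw [← Equiv.sum_comp (dicEquiv (A := A) (y := y) (hy := hy)).symm F]
  rw [Fintype.sum_prod_type, Fintype.sum_bool]
  rw [add_comm]
  rfl

/-- The candidate eigenvector. -/
noncomputable def uvec (χ : A →* ℂˣ) (ε : ℂ) : Dic A y hy → ℂ :=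
  fun g => if g.t then ε * (χ g.a⁻¹ : ℂ) else (χ g.a : ℂ)

/-- The complex adjacency-type matrix. -/
noncomputable def NS (S : Set (Dic A y hy)) : Matrix (Dic A y hy) (Dic A y hy) ℂ :=
  Matrix.of fun g h => if g⁻¹ * h ∈ S then 1 else 0

theorem NS_mulVec (S : Set (Dic A y hy)) (v : Dic A y hy → ℂ) (g : Dic A y hy) :
    (NS S).mulVec v g = ∑ w : Dic A y hy, (if w ∈ S then (1 : ℂ) else 0) * v (g * w) := by
  rw [Matrix.mulVec, dotProduct]
  exact (Fintype.sum_equiv (Equiv.mulLeft g)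
    (fun w => (if w ∈ S then (1 : ℂ) else 0) * v (g * w))
    (fun h => NS S g h * v h)
    (fun w => by simp [NS, Equiv.coe_mulLeft])).symm

theorem sumA1 (χ : A →* ℂˣ) (c : A) (T : Set A) :
    ∑ a : A, (if a ∈ T then (1 : ℂ) else 0) * (χ (c * a) : ℂ) =
      (χ c : ℂ) * charSum χ T := by
  rw [charSum, Finset.mul_sum, Finset.sum_filter]
  refine Finset.sum_congr rfl fun a _ => ?_
  split_ifs
  · rw [map_mul, Units.val_mul, one_mul]
  · rw [zero_mul]

theorem sumA1' (χ : A →* ℂˣ) (c : A) (T : Set A) (hT : ∀ a, a ∈ T ↔ a⁻¹ ∈ T) :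
    ∑ a : A, (if a ∈ T then (1 : ℂ) else 0) * (χ ((c * a)⁻¹) : ℂ) =
      (χ c⁻¹ : ℂ) * charSum χ T := by
  have step : ∑ a : A, (if a ∈ T then (1 : ℂ) else 0) * (χ ((c * a)⁻¹) : ℂ) =
      ∑ a : A, (if a ∈ T then (1 : ℂ) else 0) * (χ (c⁻¹ * a)  : ℂ) := by
    refine Fintype.sum_equiv (Equiv.inv A) _ _ fun a => ?_
    have h1 : ((Equiv.inv A) a : A) = a⁻¹ := rfl
    rw [h1]
    by_cases ha : a ∈ T
    · rw [if_pos ha, if_pos ((hT a).1 ha)]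
      congr 2
      rw [mul_inv_rev, mul_comm]
    · rw [if_neg ha, if_neg (fun h => ha ((hT a).2 h)), zero_mul, zero_mul]
  rw [step]
  exact sumA1 χ c⁻¹ T

theorem sumA2 (χ : A →* ℂˣ) (c : A) (T : Set A) (hT : ∀ a, a ∈ T ↔ y * a ∈ T) :
    ∑ a : A, (if a ∈ T then (1 : ℂ) else 0) * (χ (c * a * y) : ℂ) =
      (χ c : ℂ) * charSum χ T := by
  have step : ∑ a : A, (if a ∈ T then (1 : ℂ) else 0) * (χ (c * a * y) : ℂ) =
      ∑ a : A, (if a ∈ T then (1 : ℂ) else 0) * (χ (c * a) : ℂ) := by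
    refine Fintype.sum_equiv (Equiv.mulLeft y) _ _ fun a => ?_
    have h1 : ((Equiv.mulLeft y) a : A) = y * a := rfl
    rw [h1]
    by_cases ha : a ∈ T
    · rw [if_pos ha, if_pos ((hT a).1 ha)]
      have hcy : c * a * y = c * (y * a) := by rw [mul_assoc, mul_comm a y]
      rw [hcy]
    · rw [if_neg ha, if_neg (fun h => ha ((hT a).2 h)), zero_mul, zero_mul]
  rw [step]
  exact sumA1 χ c T

theorem NS_mulVec_uvec (S : Set (Dic A y hy)) (S₁ S₂ : Set A)
    (hmem : ∀ g : Dic A y hy, g ∈ S ↔ (g.t = false ∧ g.a ∈ S₁) ∨ (g.t = true ∧ g.a ∈ S₂))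
    (hS1 : ∀ a, a ∈ S₁ ↔ a⁻¹ ∈ S₁) (hS2 : ∀ a, a ∈ S₂ ↔ a⁻¹ ∈ S₂)
    (hyS2 : ∀ a, a ∈ S₂ ↔ y * a ∈ S₂)
    (χ : A →* ℂˣ) (ε : ℂ) (hε : ε * ε = 1) :
    (NS S).mulVec (uvec χ ε) = (charSum χ S₁ + ε * charSum χ S₂) • uvec χ ε := by
  funext g
  rw [NS_mulVec, sum_dic (fun w => (if w ∈ S then (1 : ℂ) else 0) * uvec χ ε (g * w))]
  have hmemf : ∀ a : A, ((⟨false, a⟩ : Dic A y hy) ∈ S) = (a ∈ S₁) := by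
    intro a; simp [hmem]
  have hmemt : ∀ a : A, ((⟨true, a⟩ : Dic A y hy) ∈ S) = (a ∈ S₂) := by
    intro a; simp [hmem]
  rcases g with ⟨t, b⟩
  cases t
  · -- g = ⟨false, b⟩
    have e1 : ∀ a : A, (if (⟨false, a⟩ : Dic A y hy) ∈ S then (1 : ℂ) else 0) *
        uvec χ ε ((⟨false, b⟩ : Dic A y hy) * ⟨false, a⟩) =
        (if a ∈ S₁ then (1 : ℂ) else 0) * (χ (b * a) : ℂ) := by
      intro a
      rw [hmemf]
      have huv0 : uvec χ ε ((⟨false, b⟩ : Dic A y hy) * ⟨false, a⟩) = (χ (b * a) : ℂ) := by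
        show uvec χ ε ⟨xor false false, (if false then b⁻¹ else b) * a *
          (if false && false then y else 1)⟩ = _
        simp [uvec]
      rw [huv0]
    have e2 : ∀ a : A, (if (⟨true, a⟩ : Dic A y hy) ∈ S then (1 : ℂ) else 0) *
        uvec χ ε ((⟨false, b⟩ : Dic A y hy) * ⟨true, a⟩) =
        ε * ((if a ∈ S₂ then (1 : ℂ) else 0) * (χ ((b⁻¹ * a)⁻¹) : ℂ)) := by
      intro a
      rw [hmemt]
      have : uvec χ ε ((⟨false, b⟩ : Dic A y hy) * ⟨true, a⟩) = ε * (χ ((b⁻¹ * a)⁻¹) : ℂ) := by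
        show uvec χ ε ⟨xor false true, (if true then b⁻¹ else b) * a *
          (if false && true then y else 1)⟩ = _
        simp [uvec]
      rw [this]
      ring
    rw [Finset.sum_congr rfl fun a _ => e1 a, Finset.sum_congr rfl fun a _ => e2 a]
    rw [← Finset.mul_sum]
    have h1 := sumA1 χ b S₁
    have h2 : ∑ a : A, (if a ∈ S₂ then (1 : ℂ) else 0) * (χ ((b⁻¹ * a)⁻¹) : ℂ) =
        (χ b⁻¹⁻¹ : ℂ) * charSum χ S₂ := sumA1' χ b⁻¹ S₂ hS2
    rw [h1, h2]
    have huv : uvec χ ε (⟨false, b⟩ : Dic A y hy) = (χ b : ℂ) := by simp [uvec]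
    rw [Pi.smul_apply, huv, smul_eq_mul, inv_inv]
    ring
  · -- g = ⟨true, b⟩
    have e1 : ∀ a : A, (if (⟨false, a⟩ : Dic A y hy) ∈ S then (1 : ℂ) else 0) *
        uvec χ ε ((⟨true, b⟩ : Dic A y hy) * ⟨false, a⟩) =
        ε * ((if a ∈ S₁ then (1 : ℂ) else 0) * (χ ((b * a)⁻¹) : ℂ)) := by
      intro a
      rw [hmemf]
      have : uvec χ ε ((⟨true, b⟩ : Dic A y hy) * ⟨false, a⟩) = ε * (χ ((b * a)⁻¹) : ℂ) := by
        show uvec χ ε ⟨xor true false, (if false then b⁻¹ else b) * a *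
          (if true && false then y else 1)⟩ = _
        simp [uvec]
      rw [this]
      ring
    have e2 : ∀ a : A, (if (⟨true, a⟩ : Dic A y hy) ∈ S then (1 : ℂ) else 0) *
        uvec χ ε ((⟨true, b⟩ : Dic A y hy) * ⟨true, a⟩) =
        (if a ∈ S₂ then (1 : ℂ) else 0) * (χ (b⁻¹ * a * y) : ℂ) := by
      intro a
      rw [hmemt]
      have huv0 : uvec χ ε ((⟨true, b⟩ : Dic A y hy) * ⟨true, a⟩) = (χ (b⁻¹ * a * y) : ℂ) := by
        show uvec χ ε ⟨xor true true, (if true then b⁻¹ else b) * a *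
          (if true && true then y else 1)⟩ = _
        simp [uvec]
      rw [huv0]
    rw [Finset.sum_congr rfl fun a _ => e1 a, Finset.sum_congr rfl fun a _ => e2 a]
    rw [← Finset.mul_sum]
    have h1 : ∑ a : A, (if a ∈ S₁ then (1 : ℂ) else 0) * (χ ((b * a)⁻¹) : ℂ) =
        (χ b⁻¹ : ℂ) * charSum χ S₁ := sumA1' χ b S₁ hS1
    have h2 := sumA2 χ b⁻¹ S₂ hyS2
    rw [h1, h2]
    have huv : uvec χ ε (⟨true, b⟩ : Dic A y hy) = ε * (χ b⁻¹ : ℂ) := by simp [uvec]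
    rw [Pi.smul_apply, huv, smul_eq_mul]
    linear_combination (-(charSum χ S₂ * (χ b⁻¹ : ℂ))) * hε

end Spectral

section Spectral2

variable {A : Type*} [CommGroup A] [Fintype A] {y : A} {hy : y * y = 1}

theorem uvec_ne_zero (χ : A →* ℂˣ) (ε : ℂ) : uvec (y := y) (hy := hy) χ ε ≠ 0 := by
  intro h
  have h1 := congrFun h (⟨false, 1⟩ : Dic A y hy)
  simp [uvec] at h1

/-- Characters as functions. -/
noncomputable def charFun (χ : A →* ℂˣ) : A → ℂ := fun a => (χ a : ℂ)

set_option maxHeartbeats 1000000 in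
theorem span_charFun : Submodule.span ℂ (Set.range (charFun (A := A))) = ⊤ := by
  have li0 := linearIndependent_monoidHom A ℂ
  have hinj : Function.Injective (fun χ : A →* ℂˣ => (Units.coeHom ℂ).comp χ) := by
    intro χ1 χ2 h
    ext a
    have h2 := congrArg (fun f : A →* ℂ => f a) h
    exact h2
  have li : LinearIndependent ℂ (charFun (A := A)) := li0.comp _ hinj
  apply li.span_eq_top_of_card_eq_finrank
  rw [card_chars, Module.finrank_fintype_fun_eq_card]

/-- First inclusion linear map. -/
noncomputable def L1 : (A → ℂ) →ₗ[ℂ] (Dic A y hy → ℂ) where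
  toFun w := fun g => if g.t then 0 else w g.a
  map_add' w1 w2 := by funext g; by_cases h : g.t <;> simp [h]
  map_smul' c w := by funext g; by_cases h : g.t <;> simp [h]

noncomputable def L2 : (A → ℂ) →ₗ[ℂ] (Dic A y hy → ℂ) where
  toFun w := fun g => if g.t then w g.a else 0
  map_add' w1 w2 := by funext g; by_cases h : g.t <;> simp [h]
  map_smul' c w := by funext g; by_cases h : g.t <;> simp [h]

/-- The generating set of eigenvectors. -/
def Uset : Set (Dic A y hy → ℂ) :=
  {v | ∃ χ : A →* ℂˣ, ∃ ε : ℂ, (ε = 1 ∨ ε = -1) ∧ v = uvec χ ε}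

theorem span_uvec_top : Submodule.span ℂ (Uset (A := A) (y := y) (hy := hy)) = ⊤ := by
  rw [eq_top_iff]
  rintro v -
  have hL1 : ∀ w : A → ℂ, L1 (y := y) (hy := hy) w ∈ Submodule.span ℂ (Uset (A := A)) := by
    intro w
    have hw : w ∈ Submodule.span ℂ (Set.range (charFun (A := A))) := by
      rw [span_charFun]; trivial
    have hmap := Submodule.mem_map_of_mem (f := L1 (A := A) (y := y) (hy := hy)) hw
    rw [Submodule.map_span] at hmap
    refine Submodule.span_le.2 ?_ hmap
    rintro v' ⟨v0, ⟨χ, rfl⟩, rfl⟩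
    have he : L1 (y := y) (hy := hy) (charFun χ) =
        (2 : ℂ)⁻¹ • (uvec χ 1 + uvec χ (-1)) := by
      funext g
      rcases g with ⟨t, a⟩
      cases t <;> simp [L1, charFun, uvec] <;> ring
    rw [he]
    refine Submodule.smul_mem _ _ (Submodule.add_mem _ ?_ ?_)
    · exact Submodule.subset_span ⟨χ, 1, Or.inl rfl, rfl⟩
    · exact Submodule.subset_span ⟨χ, -1, Or.inr rfl, rfl⟩
  have hL2 : ∀ w : A → ℂ, L2 (y := y) (hy := hy) w ∈ Submodule.span ℂ (Uset (A := A)) := by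
    intro w
    have hw : w ∈ Submodule.span ℂ (Set.range (charFun (A := A))) := by
      rw [span_charFun]; trivial
    have hmap := Submodule.mem_map_of_mem (f := L2 (A := A) (y := y) (hy := hy)) hw
    rw [Submodule.map_span] at hmap
    refine Submodule.span_le.2 ?_ hmap
    rintro v' ⟨v0, ⟨χ, rfl⟩, rfl⟩
    have he : L2 (y := y) (hy := hy) (charFun χ) =
        (2 : ℂ)⁻¹ • (uvec χ⁻¹ 1 - uvec χ⁻¹ (-1)) := by
      funext g
      rcases g with ⟨t, a⟩
      cases t <;>
        simp [L2, charFun, uvec, MonoidHom.inv_apply, Units.val_inv_eq_inv_val] <;> ring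
    rw [he]
    refine Submodule.smul_mem _ _ (Submodule.sub_mem _ ?_ ?_)
    · exact Submodule.subset_span ⟨χ⁻¹, 1, Or.inl rfl, rfl⟩
    · exact Submodule.subset_span ⟨χ⁻¹, -1, Or.inr rfl, rfl⟩
  have hv : v = L1 (y := y) (hy := hy) (fun a => v ⟨false, a⟩) +
      L2 (y := y) (hy := hy) (fun a => v ⟨true, a⟩) := by
    funext g
    rcases g with ⟨t, a⟩
    cases t <;> simp [L1, L2]
  rw [hv]
  exact Submodule.add_mem _ (hL1 _) (hL2 _)

theorem pow_mulVec {n' : Type*} [Fintype n'] [DecidableEq n'] (N : Matrix n' n' ℂ)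
    (v : n' → ℂ) (μ : ℂ) (hv : N.mulVec v = μ • v) (n : ℕ) :
    (N ^ n).mulVec v = μ ^ n • v := by
  induction n with
  | zero => simp [Matrix.one_mulVec]
  | succ n ih =>
      rw [pow_succ, ← Matrix.mulVec_mulVec, hv, Matrix.mulVec_smul, ih, smul_smul, pow_succ]
      ring_nf

theorem aeval_mulVec {n' : Type*} [Fintype n'] [DecidableEq n'] (N : Matrix n' n' ℂ)
    (v : n' → ℂ) (μ : ℂ) (hv : N.mulVec v = μ • v) (p : Polynomial ℂ) :
    (Polynomial.aeval N p).mulVec v = p.eval μ • v := by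
  induction p using Polynomial.induction_on' with
  | add p q hp hq => rw [map_add, Matrix.add_mulVec, hp, hq, Polynomial.eval_add, add_smul]
  | monomial n a =>
      rw [Polynomial.aeval_monomial, Polynomial.eval_monomial, ← Matrix.mulVec_mulVec,
        pow_mulVec N v μ hv n, Matrix.mulVec_smul, Algebra.algebraMap_eq_smul_one,
        Matrix.smul_mulVec, Matrix.one_mulVec, smul_smul]
      rw [mul_comm]

theorem matrix_zero_of_vanish {n' : Type*} [Fintype n'] [DecidableEq n'] (Q : Matrix n' n' ℂ)
    (h : ∀ v, Q.mulVec v = 0) : Q = 0 := by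
  ext g h'
  have h1 := congrFun (h (Pi.single h' 1)) g
  rw [Matrix.mulVec_single] at h1
  simpa using h1

/-- The annihilating polynomial. -/
noncomputable def annP (S₁ S₂ : Set A) : Polynomial ℂ :=
  ∏ χ : A →* ℂˣ, ((Polynomial.X - Polynomial.C (charSum χ S₁ + charSum χ S₂)) *
    (Polynomial.X - Polynomial.C (charSum χ S₁ - charSum χ S₂)))

theorem aeval_annP_zero (S : Set (Dic A y hy)) (S₁ S₂ : Set A)
    (hmem : ∀ g : Dic A y hy, g ∈ S ↔ (g.t = false ∧ g.a ∈ S₁) ∨ (g.t = true ∧ g.a ∈ S₂))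
    (hS1 : ∀ a, a ∈ S₁ ↔ a⁻¹ ∈ S₁) (hS2 : ∀ a, a ∈ S₂ ↔ a⁻¹ ∈ S₂)
    (hyS2 : ∀ a, a ∈ S₂ ↔ y * a ∈ S₂) :
    Polynomial.aeval (NS S) (annP S₁ S₂) = 0 := by
  apply matrix_zero_of_vanish
  intro v
  have hv : v ∈ Submodule.span ℂ (Uset (A := A) (y := y) (hy := hy)) := by
    rw [span_uvec_top]; trivial
  refine Submodule.span_induction ?_ ?_ ?_ ?_ hv
  · rintro v' ⟨χ, ε, hε, rfl⟩
    have hε2 : ε * ε = 1 := by rcases hε with rfl | rfl <;> ring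
    have heig := NS_mulVec_uvec S S₁ S₂ hmem hS1 hS2 hyS2 χ ε hε2
    set lam : ℂ := charSum χ S₁ + ε * charSum χ S₂ with hlam
    have hdvd1 : (Polynomial.X - Polynomial.C lam) ∣
        ((Polynomial.X - Polynomial.C (charSum χ S₁ + charSum χ S₂)) *
          (Polynomial.X - Polynomial.C (charSum χ S₁ - charSum χ S₂))) := by
      rcases hε with rfl | rfl
      · rw [hlam, one_mul]
        exact dvd_mul_right _ _
      · rw [hlam, show charSum χ S₁ + (-1) * charSum χ S₂ =
          charSum χ S₁ - charSum χ S₂ by ring]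
        exact dvd_mul_left _ _
    have hdvd : (Polynomial.X - Polynomial.C lam) ∣ annP S₁ S₂ :=
      dvd_trans hdvd1 (Finset.dvd_prod_of_mem _ (Finset.mem_univ χ))
    obtain ⟨R, hR⟩ := hdvd
    rw [hR, mul_comm, map_mul, ← Matrix.mulVec_mulVec]
    have hinner : (Polynomial.aeval (NS S) (Polynomial.X - Polynomial.C lam)).mulVec
        (uvec χ ε) = 0 := by
      rw [map_sub, Polynomial.aeval_X, Polynomial.aeval_C, Matrix.sub_mulVec, heig,
        Algebra.algebraMap_eq_smul_one, Matrix.smul_mulVec, Matrix.one_mulVec, sub_self]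
    rw [hinner, Matrix.mulVec_zero]
  · exact Matrix.mulVec_zero _
  · intro v1 v2 _ _ h1 h2
    rw [Matrix.mulVec_add, h1, h2, add_zero]
  · intro c v1 _ h1
    rw [Matrix.mulVec_smul, h1, smul_zero]

end Spectral2

section Spectral3

variable {A : Type*} [CommGroup A] [Fintype A] {y : A} {hy : y * y = 1}

theorem map_det_ofReal {n' : Type*} [Fintype n'] [DecidableEq n'] (B : Matrix n' n' ℝ) :
    ((B.det : ℝ) : ℂ) = (B.map Complex.ofReal).det := by
  have hfun : (⇑Complex.ofRealHom : ℝ → ℂ) = Complex.ofReal := funext fun _ => rfl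
  have h := RingHom.map_det Complex.ofRealHom B
  rw [RingHom.mapMatrix_apply, hfun] at h
  exact h

theorem adjMatrix_map_eq (S : Set (Dic A y hy)) (h1S : (1 : Dic A y hy) ∉ S)
    (hSsym : ∀ g : Dic A y hy, g⁻¹ ∈ S ↔ g ∈ S) :
    ((cayley S).adjMatrix ℝ).map Complex.ofReal = NS S := by
  have hadj : ∀ g h : Dic A y hy, (cayley S).Adj g h ↔ g⁻¹ * h ∈ S := by
    intro g h
    rw [cayley, SimpleGraph.fromRel_adj]
    constructor
    · rintro ⟨hne, h1 | h2⟩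
      · exact h1
      · have h3 := (hSsym (h⁻¹ * g)).2 h2
        simpa [mul_inv_rev] using h3
    · intro hS'
      refine ⟨?_, Or.inl hS'⟩
      rintro rfl
      exact h1S (by simpa using hS')
  ext g h
  rw [Matrix.map_apply, SimpleGraph.adjMatrix_apply, NS]
  by_cases hc : g⁻¹ * h ∈ S
  · rw [if_pos ((hadj g h).2 hc)]
    simp only [Matrix.of_apply, if_pos hc, Complex.ofReal_one]
  · rw [if_neg (fun ha => hc ((hadj g h).1 ha))]
    simp only [Matrix.of_apply, if_neg hc, Complex.ofReal_zero]

theorem scalar_sub_map (S : Set (Dic A y hy)) (h1S : (1 : Dic A y hy) ∉ S)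
    (hSsym : ∀ g : Dic A y hy, g⁻¹ ∈ S ↔ g ∈ S) (μ : ℝ) :
    (algebraMap ℝ (Matrix (Dic A y hy) (Dic A y hy) ℝ) μ - (cayley S).adjMatrix ℝ).map
        Complex.ofReal =
      algebraMap ℂ (Matrix (Dic A y hy) (Dic A y hy) ℂ) ((μ : ℂ)) - NS S := by
  have hN := adjMatrix_map_eq S h1S hSsym
  ext g h
  rw [Matrix.map_apply, Matrix.sub_apply, Matrix.sub_apply,
    Matrix.algebraMap_matrix_apply, Matrix.algebraMap_matrix_apply]
  have hentry : ((cayley S).adjMatrix ℝ g h : ℂ) = NS S g h := by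
    rw [← hN, Matrix.map_apply]
  rw [Complex.ofReal_sub, hentry]
  split_ifs <;> simp

theorem eig_mem_spectrum (S : Set (Dic A y hy)) (S₁ S₂ : Set A)
    (h1S : (1 : Dic A y hy) ∉ S)
    (hSsym : ∀ g : Dic A y hy, g⁻¹ ∈ S ↔ g ∈ S)
    (hmem : ∀ g : Dic A y hy, g ∈ S ↔ (g.t = false ∧ g.a ∈ S₁) ∨ (g.t = true ∧ g.a ∈ S₂))
    (hS1 : ∀ a, a ∈ S₁ ↔ a⁻¹ ∈ S₁) (hS2 : ∀ a, a ∈ S₂ ↔ a⁻¹ ∈ S₂)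
    (hyS2 : ∀ a, a ∈ S₂ ↔ y * a ∈ S₂)
    (χ : A →* ℂˣ) (ε : ℂ) (hε : ε = 1 ∨ ε = -1) (μ : ℝ)
    (hμval : (μ : ℂ) = charSum χ S₁ + ε * charSum χ S₂) :
    μ ∈ spectrum ℝ ((cayley S).adjMatrix ℝ) := by
  have hε2 : ε * ε = 1 := by rcases hε with rfl | rfl <;> ring
  have heig := NS_mulVec_uvec S S₁ S₂ hmem hS1 hS2 hyS2 χ ε hε2
  have hveq : (algebraMap ℂ (Matrix (Dic A y hy) (Dic A y hy) ℂ) ((μ : ℂ)) - NS S).mulVec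
      (uvec χ ε) = 0 := by
    rw [Matrix.sub_mulVec, heig, Algebra.algebraMap_eq_smul_one, Matrix.smul_mulVec,
      Matrix.one_mulVec, ← hμval, sub_self]
  have hdetC : (algebraMap ℂ (Matrix (Dic A y hy) (Dic A y hy) ℂ) ((μ : ℂ)) - NS S).det = 0 :=
    (Matrix.exists_mulVec_eq_zero_iff).1 ⟨uvec χ ε, uvec_ne_zero χ ε, hveq⟩
  have hdetR : (algebraMap ℝ (Matrix (Dic A y hy) (Dic A y hy) ℝ) μ -
      (cayley S).adjMatrix ℝ).det = 0 := by
    have h1 : (Complex.ofReal ((algebraMap ℝ (Matrix (Dic A y hy) (Dic A y hy) ℝ) μ -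
        (cayley S).adjMatrix ℝ).det) : ℂ) = 0 := by
      rw [map_det_ofReal, scalar_sub_map S h1S hSsym μ, hdetC]
    exact_mod_cast h1
  rw [spectrum.mem_iff]
  intro hunit
  have h2 := (Matrix.isUnit_iff_isUnit_det _).1 hunit
  rw [hdetR] at h2
  exact (not_isUnit_zero h2 : False)

theorem spec_sub (S : Set (Dic A y hy)) (S₁ S₂ : Set A)
    (h1S : (1 : Dic A y hy) ∉ S)
    (hSsym : ∀ g : Dic A y hy, g⁻¹ ∈ S ↔ g ∈ S)
    (hmem : ∀ g : Dic A y hy, g ∈ S ↔ (g.t = false ∧ g.a ∈ S₁) ∨ (g.t = true ∧ g.a ∈ S₂))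
    (hS1 : ∀ a, a ∈ S₁ ↔ a⁻¹ ∈ S₁) (hS2 : ∀ a, a ∈ S₂ ↔ a⁻¹ ∈ S₂)
    (hyS2 : ∀ a, a ∈ S₂ ↔ y * a ∈ S₂)
    {μ : ℝ} (hμ : μ ∈ spectrum ℝ ((cayley S).adjMatrix ℝ)) :
    ∃ χ : A →* ℂˣ, (μ : ℂ) = charSum χ S₁ + charSum χ S₂ ∨
      (μ : ℂ) = charSum χ S₁ - charSum χ S₂ := by
  rw [spectrum.mem_iff] at hμ
  have hdetR : (algebraMap ℝ (Matrix (Dic A y hy) (Dic A y hy) ℝ) μ -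
      (cayley S).adjMatrix ℝ).det = 0 := by
    by_contra hne
    exact hμ ((Matrix.isUnit_iff_isUnit_det _).2 (isUnit_iff_ne_zero.2 hne))
  have hdetC : (algebraMap ℂ (Matrix (Dic A y hy) (Dic A y hy) ℂ) ((μ : ℂ)) - NS S).det = 0 := by
    rw [← scalar_sub_map S h1S hSsym μ, ← map_det_ofReal, hdetR, Complex.ofReal_zero]
  obtain ⟨v, hv0, hveq⟩ := (Matrix.exists_mulVec_eq_zero_iff).2 hdetC
  have hvEig : (NS S).mulVec v = (μ : ℂ) • v := by
    rw [Matrix.sub_mulVec, Algebra.algebraMap_eq_smul_one, Matrix.smul_mulVec,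
      Matrix.one_mulVec] at hveq
    exact (sub_eq_zero.1 hveq).symm
  have hP0 := aeval_annP_zero S S₁ S₂ hmem hS1 hS2 hyS2
  have h0 : (annP S₁ S₂).eval ((μ : ℂ)) • v = 0 := by
    rw [← aeval_mulVec (NS S) v ((μ : ℂ)) hvEig (annP S₁ S₂), hP0, Matrix.zero_mulVec]
  have hPeval : (annP S₁ S₂).eval ((μ : ℂ)) = 0 := by
    by_contra hne
    apply hv0
    have h1 := congrArg (fun w => ((annP S₁ S₂).eval ((μ : ℂ)))⁻¹ • w) h0
    simpa [smul_smul, inv_mul_cancel₀ hne] using h1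
  rw [annP, Polynomial.eval_prod] at hPeval
  obtain ⟨χ, -, hχ⟩ := Finset.prod_eq_zero_iff.1 hPeval
  rw [Polynomial.eval_mul, Polynomial.eval_sub, Polynomial.eval_sub, Polynomial.eval_X,
    Polynomial.eval_C, Polynomial.eval_C, mul_eq_zero] at hχ
  refine ⟨χ, ?_⟩
  rcases hχ with h | h
  · exact Or.inl (sub_eq_zero.1 h)
  · exact Or.inr (sub_eq_zero.1 h)

theorem charSum_real (χ : A →* ℂˣ) {T : Set A} (hT : ∀ a, a ∈ T ↔ a⁻¹ ∈ T) :
    ∃ ρ : ℝ, charSum χ T = (ρ : ℂ) := by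
  have hconj : (starRingEnd ℂ) (charSum χ T) = charSum χ T := by
    rw [charSum, map_sum]
    have hstep : ∀ a : A, (starRingEnd ℂ) ((χ a : ℂ)) = (χ a⁻¹ : ℂ) := by
      intro a
      have hpow : ((χ a : ℂ)) ^ Fintype.card A = 1 := by
        have h1 : (χ a) ^ Fintype.card A = 1 := by
          rw [← map_pow, pow_card_eq_one, map_one]
        rw [← Units.val_pow_eq_pow_val, h1, Units.val_one]
      have hnorm : ‖(χ a : ℂ)‖ = 1 :=
        Complex.norm_eq_one_of_pow_eq_one hpow Fintype.card_ne_zero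
      rw [← Complex.inv_eq_conj hnorm, map_inv, Units.val_inv_eq_inv_val]
    rw [Finset.sum_congr rfl fun a _ => hstep a]
    -- reindex by inversion
    rw [Finset.sum_filter, Finset.sum_filter]
    refine Fintype.sum_equiv (Equiv.inv A) _ _ fun a => ?_
    have h1 : ((Equiv.inv A) a : A) = a⁻¹ := rfl
    rw [h1]
    by_cases ha : a ∈ T
    · rw [if_pos ha, if_pos ((hT a).1 ha)]
    · rw [if_neg ha, if_neg (fun h => ha ((hT a).2 h))]
  obtain ⟨r, hr⟩ := Complex.conj_eq_iff_real.1 hconj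
  exact ⟨r, hr⟩

end Spectral3


/-- Corollary 3.5: for `S = S₁ ∪ xS₂ ⊆ Dic(A,y)` with `1 ∉ S`, `S⁻¹ = S`,
one has `S₁, S₂ ∈ B(A)` iff `Cay(Dic(A,y), S)` is integral and `S₂⁻¹ = S₂`. -/
theorem cayley_dic_integral_boolean_iff {A : Type*} [CommGroup A] [Fintype A]
    (hA : Even (Fintype.card A)) (hexp : 3 ≤ Monoid.exponent A)
    (y : A) (hy : y * y = 1) (hy1 : y ≠ 1)
    (S : Set (Dic A y hy)) (S₁ S₂ : Set A)
    (hS : S = Dic.ofA '' S₁ ∪ (fun a => Dic.x A y hy * Dic.ofA a) '' S₂)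
    (h1S : (1 : Dic A y hy) ∉ S) (hSinv : S⁻¹ = S) :
    (InBoolAlg A S₁ ∧ InBoolAlg A S₂) ↔
      (IsIntegralGraph (cayley S) ∧ S₂⁻¹ = S₂) := by
  classical
  have hxofA : ∀ a : A, Dic.x A y hy * Dic.ofA a = (⟨true, a⟩ : Dic A y hy) := by
    intro a
    ext
    · rfl
    · show (if false then (1 : A)⁻¹ else 1) * a * (if true && false then y else 1) = a
      simp
  have hmem : ∀ g : Dic A y hy, g ∈ S ↔ (g.t = false ∧ g.a ∈ S₁) ∨ (g.t = true ∧ g.a ∈ S₂) := by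
    intro g
    rw [hS]
    simp only [Set.mem_union, Set.mem_image]
    constructor
    · rintro (⟨a, ha, rfl⟩ | ⟨a, ha, hEq⟩)
      · exact Or.inl ⟨rfl, ha⟩
      · rw [hxofA a] at hEq
        subst hEq
        exact Or.inr ⟨rfl, ha⟩
    · rintro (⟨ht, ha⟩ | ⟨ht, ha⟩)
      · refine Or.inl ⟨g.a, ha, ?_⟩
        show (⟨false, g.a⟩ : Dic A y hy) = g
        rcases g with ⟨t, b⟩
        subst ht
        rfl
      · refine Or.inr ⟨g.a, ha, ?_⟩
        rw [hxofA]
        rcases g with ⟨t, b⟩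
        subst ht
        rfl
  have hSsym : ∀ g : Dic A y hy, g⁻¹ ∈ S ↔ g ∈ S := by
    intro g
    constructor
    · intro h
      have h2 : g ∈ S⁻¹ := Set.mem_inv.2 h
      rwa [hSinv] at h2
    · intro h
      have h2 : g⁻¹ ∈ S⁻¹ := Set.mem_inv.2 (by simpa using h)
      rwa [hSinv] at h2
  have hinvf : ∀ a : A, (⟨false, a⟩ : Dic A y hy)⁻¹ = ⟨false, a⁻¹⟩ := fun a => rfl
  have hinvt : ∀ a : A, (⟨true, a⟩ : Dic A y hy)⁻¹ = ⟨true, y * a⟩ := fun a => rfl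
  have hS1 : ∀ a : A, a ∈ S₁ ↔ a⁻¹ ∈ S₁ := by
    intro a
    have h1 : (⟨false, a⟩ : Dic A y hy) ∈ S ↔ a ∈ S₁ := by simp [hmem]
    have h2 : (⟨false, a⁻¹⟩ : Dic A y hy) ∈ S ↔ a⁻¹ ∈ S₁ := by simp [hmem]
    rw [← h1, ← h2, ← hinvf a]
    exact (hSsym _).symm
  have hyS2 : ∀ a : A, a ∈ S₂ ↔ y * a ∈ S₂ := by
    intro a
    have h1 : (⟨true, a⟩ : Dic A y hy) ∈ S ↔ a ∈ S₂ := by simp [hmem]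
    have h2 : (⟨true, y * a⟩ : Dic A y hy) ∈ S ↔ y * a ∈ S₂ := by simp [hmem]
    rw [← h1, ← h2, ← hinvt a]
    exact (hSsym _).symm
  constructor
  · rintro ⟨hB1, hB2⟩
    have hA1 : AtomInv S₁ := hB1.atomInv
    have hA2 : AtomInv S₂ := hB2.atomInv
    have hS2set : S₂⁻¹ = S₂ := hA2.inv_eq
    have hS2 : ∀ a : A, a ∈ S₂ ↔ a⁻¹ ∈ S₂ := set_inv_pointwise hS2set
    refine ⟨?_, hS2set⟩
    intro μ hμ
    obtain ⟨χ, hcase⟩ := spec_sub S S₁ S₂ h1S hSsym hmem hS1 hS2 hyS2 hμ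
    obtain ⟨k1, hk1⟩ := charSum_int_of_atomInv χ hA1
    obtain ⟨k2, hk2⟩ := charSum_int_of_atomInv χ hA2
    rcases hcase with h | h
    · refine ⟨k1 + k2, ?_⟩
      have hval : (μ : ℂ) = ((k1 + k2 : ℤ) : ℂ) := by
        rw [h, hk1, hk2]; push_cast; ring
      exact_mod_cast hval.symm
    · refine ⟨k1 - k2, ?_⟩
      have hval : (μ : ℂ) = ((k1 - k2 : ℤ) : ℂ) := by
        rw [h, hk1, hk2]; push_cast; ring
      exact_mod_cast hval.symm
  · rintro ⟨hI, hS2set⟩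
    have hS2 : ∀ a : A, a ∈ S₂ ↔ a⁻¹ ∈ S₂ := set_inv_pointwise hS2set
    have hkey : ∀ χ : A →* ℂˣ, (∃ q : ℚ, charSum χ S₁ = (q : ℂ)) ∧
        (∃ q : ℚ, charSum χ S₂ = (q : ℂ)) := by
      intro χ
      obtain ⟨ρ1, hρ1⟩ := charSum_real χ hS1
      obtain ⟨ρ2, hρ2⟩ := charSum_real χ hS2
      have hplus : (ρ1 + ρ2 : ℝ) ∈ spectrum ℝ ((cayley S).adjMatrix ℝ) := by
        refine eig_mem_spectrum S S₁ S₂ h1S hSsym hmem hS1 hS2 hyS2 χ 1 (Or.inl rfl)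
          (ρ1 + ρ2) ?_
        rw [hρ1, hρ2]; push_cast; ring
      have hminus : (ρ1 - ρ2 : ℝ) ∈ spectrum ℝ ((cayley S).adjMatrix ℝ) := by
        refine eig_mem_spectrum S S₁ S₂ h1S hSsym hmem hS1 hS2 hyS2 χ (-1) (Or.inr rfl)
          (ρ1 - ρ2) ?_
        rw [hρ1, hρ2]; push_cast; ring
      obtain ⟨kp, hkp⟩ := hI _ hplus
      obtain ⟨km, hkm⟩ := hI _ hminus
      have hr1 : ρ1 = ((kp : ℝ) + km) / 2 := by
        have e1 : (kp : ℝ) = ρ1 + ρ2 := hkp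
        have e2 : (km : ℝ) = ρ1 - ρ2 := hkm
        linarith
      have hr2 : ρ2 = ((kp : ℝ) - km) / 2 := by
        have e1 : (kp : ℝ) = ρ1 + ρ2 := hkp
        have e2 : (km : ℝ) = ρ1 - ρ2 := hkm
        linarith
      constructor
      · refine ⟨((kp : ℚ) + km) / 2, ?_⟩
        rw [hρ1, hr1]; push_cast; ring
      · refine ⟨((kp : ℚ) - km) / 2, ?_⟩
        rw [hρ2, hr2]; push_cast; ring
    have hrat1 : ∀ χ : A →* ℂˣ, ∃ q : ℚ, charSum χ S₁ = (q : ℂ) := fun χ => (hkey χ).1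
    have hrat2 : ∀ χ : A →* ℂˣ, ∃ q : ℚ, charSum χ S₂ = (q : ℂ) := fun χ => (hkey χ).2
    exact ⟨(atomInv_of_charSum_rat hrat1).inBoolAlg, (atomInv_of_charSum_rat hrat2).inBoolAlg⟩
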